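/- arXiv:0906.4661 — 2 statements merged into one kernel-verified Lean document; each statement's English description precedes it below -/
import Mathlib

section
/- Suppose l ∈ ℝ and Q, N, Φ₁, ψ₂ are radial functions on ℝ³ (with Q, N ∈ C¹((0,∞)), Q bounded near 0 with Q = O(r⁻²) at infinity, N → 0 at infinity, Φ₁ ∈ H²_rad, ψ₂ ∈ C¹) satisfying, on (0,∞): (rQ)′ + 2l(rf₀)′ − 16πmG r²Φ₁² = 0; 2rN′ − 2lf₀ − Q = 0; (η/ħ − mN/ħ)Φ₁ − ψ₂′ − (2/r)ψ₂ = 0; (2m/ħ)ψ₂ + Φ₁′ = 0, where f₀(r) = r²/(1+r)³ and η ∈ ℝ. Then −ΔN = −8πmG|Φ₁|² on ℝ³, ψ₂ = −(ħ/(2m))Φ₁′, and Φ₁ satisfies ηΦ₁ = −(ħ²/(2m))ΔΦ₁ + mNΦ₁; that is, (Φ₁, N) is a bound-state solution of the Newton–Schrödinger system with frequency η. -/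
/-!
STATEMENT 12: Any solution of the `ε = 0` (Newtonian) limit of the rescaled
spherically symmetric Einstein–Dirac system gives a bound-state solution of the
Newton–Schrödinger system: `−ΔN = −8πmG|Φ₁|²`, `ψ₂ = −(ħ/2m)Φ₁′` and
`ηΦ₁ = −(ħ²/2m)ΔΦ₁ + mNΦ₁`.
-/

noncomputable section

open MeasureTheory Real Set Filter Topology Asymptotics

abbrev E3 := EuclideanSpace ℝ (Fin 3)

/-- The radial extension of a profile on `[0,∞)` to `ℝ³`. -/
def radExt (f : ℝ → ℝ) : E3 → ℝ := fun x => f ‖x‖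

/-- `f₀(r) = r²/(1+r)³`. -/
def f0 (r : ℝ) : ℝ := r ^ 2 / (1 + r) ^ 3

theorem limit_system_gives_newton_schrodinger (hbar m G η l : ℝ)
    (hhb : 0 < hbar) (hm : 0 < m) (hG : 0 < G)
    (Q N Φ₁ ψ₂ : ℝ → ℝ)
    (hQ : ContDiffOn ℝ 1 Q (Ioi 0)) (hN : ContDiffOn ℝ 1 N (Ioi 0))
    (hQ0 : ∃ C r₀ : ℝ, 0 < r₀ ∧ ∀ r ∈ Ioo (0:ℝ) r₀, |Q r| ≤ C)
    (hQinf : Q =O[atTop] fun r => 1 / r ^ 2)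
    (hNinf : Tendsto N atTop (𝓝 0))
    (hΦ : ContDiff ℝ 2 (radExt Φ₁))
    (hΦL2 : ∀ n : ℕ, n ≤ 2 →
      MemLp (fun x => ‖iteratedFDeriv ℝ n (radExt Φ₁) x‖) 2 (volume : Measure E3))
    (hψ : ContDiffOn ℝ 1 ψ₂ (Ici 0))
    (h1 : ∀ r : ℝ, 0 < r →
      deriv (fun s => s * Q s) r + 2 * l * deriv (fun s => s * f0 s) r
        - 16 * π * m * G * r ^ 2 * (Φ₁ r) ^ 2 = 0)
    (h2 : ∀ r : ℝ, 0 < r → 2 * r * deriv N r - 2 * l * f0 r - Q r = 0)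
    (h3 : ∀ r : ℝ, 0 < r →
      (η / hbar - m * N r / hbar) * Φ₁ r - deriv ψ₂ r - (2 / r) * ψ₂ r = 0)
    (h4 : ∀ r : ℝ, 0 < r → (2 * m / hbar) * ψ₂ r + deriv Φ₁ r = 0) :
    ∀ r : ℝ, 0 < r →
      (-(deriv (deriv N) r + (2 / r) * deriv N r) = -(8 * π * m * G) * (Φ₁ r) ^ 2) ∧
      (ψ₂ r = -(hbar / (2 * m)) * deriv Φ₁ r) ∧
      (η * Φ₁ r = -(hbar ^ 2 / (2 * m)) * (deriv (deriv Φ₁) r + (2 / r) * deriv Φ₁ r)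
        + m * N r * Φ₁ r) := by
  intro r hr
  have hr' : r ≠ 0 := ne_of_gt hr
  have hm' : m ≠ 0 := ne_of_gt hm
  have hh' : hbar ≠ 0 := ne_of_gt hhb
  have hmem : Ioi (0:ℝ) ∈ 𝓝 r := Ioi_mem_nhds hr
  -- ### Part 1 : the Poisson equation for N
  set A : ℝ → ℝ := fun s => s * Q s with hAdef
  set B : ℝ → ℝ := fun s => s * f0 s with hBdef
  set F : ℝ → ℝ := fun s => (2 * l * B s + A s) / (2 * s ^ 2) with hFdef
  have hQd : DifferentiableAt ℝ Q r :=
    (hQ.differentiableOn one_ne_zero).differentiableAt hmem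
  have hf0d : DifferentiableAt ℝ f0 r := by
    have h1r : (1 + r) ^ 3 ≠ 0 := by positivity
    exact (differentiableAt_fun_id.pow 2).div
      (((differentiableAt_const 1).add differentiableAt_fun_id).pow 3) h1r
  have hA' : HasDerivAt A (deriv A r) r :=
    (differentiableAt_fun_id.mul hQd).hasDerivAt
  have hB' : HasDerivAt B (deriv B r) r :=
    (differentiableAt_fun_id.mul hf0d).hasDerivAt
  have hnum : HasDerivAt (fun s => 2 * l * B s + A s)
      (2 * l * deriv B r + deriv A r) r :=
    (hB'.const_mul (2 * l)).add hA'
  have hden : HasDerivAt (fun s : ℝ => 2 * s ^ 2) (4 * r) r := by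
    exact ((hasDerivAt_pow 2 r).const_mul (2 : ℝ)).congr_deriv
      (by rw [show (2:ℕ) - 1 = 1 from rfl]; push_cast; ring)
  have hden0 : 2 * r ^ 2 ≠ 0 := by positivity
  have hFD : HasDerivAt F
      (((2 * l * deriv B r + deriv A r) * (2 * r ^ 2)
        - (2 * l * B r + A r) * (4 * r)) / (2 * r ^ 2) ^ 2) r :=
    hnum.div hden hden0
  have hNF : ∀ s : ℝ, 0 < s → deriv N s = F s := by
    intro s hs
    have hs' : s ≠ 0 := ne_of_gt hs
    have h := h2 s hs
    simp only [hFdef, hAdef, hBdef]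
    field_simp
    linear_combination h
  have hderiv2 : deriv (deriv N) r = deriv F r :=
    Filter.EventuallyEq.deriv_eq
      (Filter.eventually_of_mem hmem (fun t ht => hNF t ht))
  have h1r := h1 r hr
  have hkey : deriv A r + 2 * l * deriv B r
      = 16 * π * m * G * r ^ 2 * (Φ₁ r) ^ 2 := by
    simp only [hAdef, hBdef]; linarith [h1r]
  have part1 : -(deriv (deriv N) r + (2 / r) * deriv N r)
      = -(8 * π * m * G) * (Φ₁ r) ^ 2 := by
    rw [hderiv2, hFD.deriv, hNF r hr]
    simp only [hFdef]
    field_simp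
    linear_combination (-(2:ℝ) * r) * h1r
  -- ### Parts 2 and 3 : the Schrödinger equation
  have hψeq : ∀ s : ℝ, 0 < s → ψ₂ s = -(hbar / (2 * m)) * deriv Φ₁ s := by
    intro s hs
    have h := h4 s hs
    field_simp at h ⊢
    linarith
  set v : E3 := EuclideanSpace.single (0 : Fin 3) (1:ℝ) with hv
  set g : ℝ → ℝ := fun s => radExt Φ₁ (s • v) with hgdef
  have hg : ContDiff ℝ 2 g := hΦ.comp (contDiff_id.smul contDiff_const)
  have hΦg : ∀ s : ℝ, 0 < s → Φ₁ s = g s := by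
    intro s hs
    simp [hgdef, radExt, norm_smul, hv, EuclideanSpace.norm_single, abs_of_pos hs]
  have hd1 : ∀ s : ℝ, 0 < s → deriv Φ₁ s = deriv g s := by
    intro s hs
    exact Filter.EventuallyEq.deriv_eq
      (Filter.eventually_of_mem (Ioi_mem_nhds hs) (fun t ht => hΦg t ht))
  have hgd : Differentiable ℝ (deriv g) := by
    have h2 : ContDiff ℝ (1+1) g := by exact_mod_cast hg
    exact (contDiff_succ_iff_deriv.mp h2).2.2.differentiable one_ne_zero
  have hΦ'd : DifferentiableAt ℝ (deriv Φ₁) r :=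
    (hgd r).congr_of_eventuallyEq
      (Filter.eventually_of_mem hmem (fun t ht => hd1 t ht))
  have hdψ : deriv ψ₂ r = -(hbar / (2 * m)) * deriv (deriv Φ₁) r := by
    have heq : deriv ψ₂ r = deriv (fun s => -(hbar / (2 * m)) * deriv Φ₁ s) r :=
      Filter.EventuallyEq.deriv_eq
        (Filter.eventually_of_mem hmem (fun t ht => hψeq t ht))
    rw [heq, deriv_const_mul _ hΦ'd]
  have h3r := h3 r hr
  rw [hdψ, hψeq r hr] at h3r
  refine ⟨part1, hψeq r hr, ?_⟩
  field_simp at h3r ⊢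
  nlinarith [h3r]
end
end

section
/- Let f₀(r) = r²/(1+r)³, let l ∈ ℝ, let g : [0,∞) → ℝ be integrable (∫_0^∞ |g| dr < ∞), and let Q ∈ C¹((0,∞)) be bounded on a neighbourhood of 0 and satisfy sup_{r≥1} r²|Q(r)| < ∞. If (rQ)′ + 2l(rf₀)′ = g on (0,∞), then 2l = ∫_0^∞ g(r) dr, and consequently Q(r) = (1/r)∫_0^r [−2l(sf₀(s))′ + g(s)] ds = −(1/r)∫_r^∞ [−2l(sf₀(s))′ + g(s)] ds for all r > 0. -/
/-!
STATEMENT 18: The ADM mass parameter `l` is determined by integrating the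
Hamiltonian constraint `(rQ)′ + 2l(rf₀)′ = g`: one has `2l = ∫_0^∞ g` and the
two explicit integral representations of `Q`.
-/

noncomputable section

open MeasureTheory Real Set

namespace AdmAux

open Filter Topology

/-- `φ(t) = t³/(1+t)³`, i.e. `t·f₀(t)`. -/
def φ (t : ℝ) : ℝ := t ^ 3 / (1 + t) ^ 3

/-- `φ'(t) = 3t²/(1+t)⁴`. -/
def φ' (t : ℝ) : ℝ := 3 * t ^ 2 / (1 + t) ^ 4

lemma hψ : (fun t : ℝ => t * f0 t) = φ := by
  funext t; rw [φ, f0, ← mul_div_assoc, ← pow_succ']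

lemma hφderiv {t : ℝ} (ht : 0 < t) : HasDerivAt φ (φ' t) t := by
  have h1 : (1 : ℝ) + t ≠ 0 := by positivity
  have hd : HasDerivAt (fun t : ℝ => (1 + t) ^ 3) (3 * (1 + t) ^ 2 * 1) t :=
    (((hasDerivAt_id t).const_add 1).pow 3).congr_deriv (by simp [id])
  have := (hasDerivAt_pow 3 t).div hd (pow_ne_zero 3 h1)
  refine this.congr_deriv ?_
  unfold φ'
  field_simp
  ring

lemma hderivψ {s : ℝ} (hs : 0 < s) : deriv (fun t : ℝ => t * f0 t) s = φ' s := by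
  rw [hψ]; exact (hφderiv hs).deriv

lemma hφtop : Tendsto φ atTop (𝓝 1) := by
  have h : Tendsto (fun t : ℝ => ((t⁻¹ + 1)⁻¹) ^ 3) atTop (𝓝 1) := by
    have : Tendsto (fun t : ℝ => t⁻¹ + 1) atTop (𝓝 1) := by
      simpa using ((tendsto_inv_atTop_zero (𝕜 := ℝ)).add
        (tendsto_const_nhds (x := (1:ℝ))))
    simpa using (this.inv₀ one_ne_zero).pow 3
  apply h.congr'
  filter_upwards [eventually_gt_atTop 0] with t ht
  have h1 : (1 : ℝ) + t ≠ 0 := by positivity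
  rw [φ, ← div_pow]
  congr 1
  field_simp

lemma hφ0 : φ 0 = 0 := by simp [φ]

lemma hφcont0 : ContinuousWithinAt φ (Ici 0) 0 := by
  have : ContinuousAt φ 0 := by
    apply ContinuousAt.div (by fun_prop) (by fun_prop)
    norm_num
  exact this.continuousWithinAt

lemma hφ'nonneg : ∀ t ∈ Ioi (0:ℝ), 0 ≤ φ' t := by
  intro t ht
  have : (0:ℝ) < t := ht
  unfold φ'
  positivity

lemma hφ'int : IntegrableOn φ' (Ioi 0) :=
  integrableOn_Ioi_deriv_of_nonneg hφcont0 (fun _ hx => hφderiv hx) hφ'nonneg hφtop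

lemma hφ'integral : (∫ s in Ioi (0:ℝ), φ' s) = 1 := by
  rw [integral_Ioi_of_hasDerivAt_of_tendsto hφcont0 (fun _ hx => hφderiv hx)
    hφ'int hφtop, hφ0, sub_zero]

end AdmAux

open Filter Topology AdmAux in
theorem adm_mass_determined (l : ℝ) (g Q : ℝ → ℝ)
    (hg : IntegrableOn g (Ioi 0))
    (hQ : ContDiffOn ℝ 1 Q (Ioi 0))
    (hQ0 : ∃ C r₀ : ℝ, 0 < r₀ ∧ ∀ r ∈ Ioo (0:ℝ) r₀, |Q r| ≤ C)
    (hQinf : ∃ C : ℝ, ∀ r : ℝ, 1 ≤ r → r ^ 2 * |Q r| ≤ C)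
    (heq : ∀ r : ℝ, 0 < r →
      deriv (fun s => s * Q s) r + 2 * l * deriv (fun s => s * f0 s) r = g r) :
    2 * l = (∫ r in Ioi (0:ℝ), g r) ∧
    (∀ r : ℝ, 0 < r →
      Q r = (1 / r) * ∫ s in Ioc (0:ℝ) r,
        (-(2 * l) * deriv (fun t => t * f0 t) s + g s)) ∧
    (∀ r : ℝ, 0 < r →
      Q r = -(1 / r) * ∫ s in Ioi r,
        (-(2 * l) * deriv (fun t => t * f0 t) s + g s)) := by
  -- `H s = s * Q s`
  have hHderiv : ∀ s ∈ Ioi (0:ℝ), HasDerivAt (fun s => s * Q s)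
      (deriv (fun s => s * Q s) s) s := by
    intro s hs
    have hQd : DifferentiableAt ℝ Q s :=
      (hQ.differentiableOn (by norm_num) s hs).differentiableAt
        (isOpen_Ioi.mem_nhds hs)
    exact (differentiableAt_id.mul hQd).hasDerivAt
  -- `H` tends to `0` at `0⁺`
  have hH0 : Tendsto (fun s => s * Q s) (𝓝[>] (0:ℝ)) (𝓝 0) := by
    obtain ⟨C, r₀, hr₀, hC⟩ := hQ0
    apply squeeze_zero_norm' (a := fun s => C * s)
    · filter_upwards [Ioo_mem_nhdsGT_of_mem (Set.mem_Ico.mpr ⟨le_rfl, hr₀⟩)] with s hs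
      have hs0 : 0 < s := hs.1
      have := hC s hs
      calc ‖s * Q s‖ = s * |Q s| := by
            simp [abs_mul, abs_of_pos hs0]
        _ ≤ s * C := by nlinarith [abs_nonneg (Q s)]
        _ = C * s := by ring
    · have : Tendsto (fun s : ℝ => C * s) (𝓝 0) (𝓝 (C * 0)) :=
        (continuous_const.mul continuous_id).tendsto 0
      simpa using this.mono_left nhdsWithin_le_nhds
  have hHcont0 : ContinuousWithinAt (fun s => s * Q s) (Ici 0) 0 := by
    rw [← continuousWithinAt_Ioi_iff_Ici]
    show Tendsto (fun s => s * Q s) (𝓝[>] 0) (𝓝 (0 * Q 0))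
    simpa using hH0
  -- `H` tends to `0` at infinity
  have hHtop : Tendsto (fun s => s * Q s) atTop (𝓝 0) := by
    obtain ⟨C, hC⟩ := hQinf
    apply squeeze_zero_norm' (a := fun s => C / s)
    · filter_upwards [eventually_ge_atTop (1:ℝ)] with s hs
      have hs0 : (0:ℝ) < s := lt_of_lt_of_le one_pos hs
      have := hC s hs
      simp only [norm_eq_abs, abs_mul, abs_of_pos hs0]
      rw [le_div_iff₀ hs0]
      nlinarith [abs_nonneg (Q s)]
    · exact Tendsto.div_atTop tendsto_const_nhds tendsto_id
  -- `deriv H = g - 2l·φ'` on `(0,∞)`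
  have hHkey : ∀ s ∈ Ioi (0:ℝ),
      deriv (fun s => s * Q s) s = g s - 2 * l * φ' s := by
    intro s hs
    have := heq s hs
    rw [hderivψ hs] at this
    linarith
  have hHint : IntegrableOn (fun s => deriv (fun s => s * Q s) s) (Ioi 0) := by
    apply IntegrableOn.congr_fun (f := fun s => g s - 2 * l * φ' s)
      (hg.sub (hφ'int.const_mul (2 * l))) _ measurableSet_Ioi
    intro s hs; exact (hHkey s hs).symm
  -- total integral of `H'` is `0`
  have hHtotal : (∫ s in Ioi (0:ℝ), deriv (fun s => s * Q s) s) = 0 := by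
    rw [integral_Ioi_of_hasDerivAt_of_tendsto hHcont0 hHderiv hHint hHtop]
    simp
  -- tail integral of `H'` is `-H r`
  have hHtail : ∀ r : ℝ, 0 < r →
      (∫ s in Ioi r, deriv (fun s => s * Q s) s) = -(r * Q r) := by
    intro r hr
    rw [integral_Ioi_of_hasDerivAt_of_tendsto
      ((hHderiv r hr).continuousAt.continuousWithinAt)
      (fun x hx => hHderiv x (lt_trans hr hx))
      (hHint.mono_set (Ioi_subset_Ioi hr.le)) hHtop]
    ring_nf
  -- head integral of `H'` is `H r`
  have hHhead : ∀ r : ℝ, 0 < r →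
      (∫ s in Ioc (0:ℝ) r, deriv (fun s => s * Q s) s) = r * Q r := by
    intro r hr
    have hsplit : (∫ s in Ioc (0:ℝ) r, deriv (fun s => s * Q s) s)
        + (∫ s in Ioi r, deriv (fun s => s * Q s) s)
        = ∫ s in Ioi (0:ℝ), deriv (fun s => s * Q s) s := by
      rw [← setIntegral_union (Ioc_disjoint_Ioi le_rfl) measurableSet_Ioi
        (hHint.mono_set Ioc_subset_Ioi_self) (hHint.mono_set (Ioi_subset_Ioi hr.le)),
        Ioc_union_Ioi_eq_Ioi hr.le]
    rw [hHtotal, hHtail r hr] at hsplit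
    linarith
  -- the statement's integrand agrees with `deriv H` on `(0,∞)`
  have hI : ∀ s ∈ Ioi (0:ℝ),
      -(2 * l) * deriv (fun t => t * f0 t) s + g s
        = deriv (fun s => s * Q s) s := by
    intro s hs
    rw [hderivψ (Set.mem_Ioi.mp hs), hHkey s hs]
    ring
  refine ⟨?_, ?_, ?_⟩
  · -- `2l = ∫ g`
    have h1 : (∫ s in Ioi (0:ℝ), g s)
        = ∫ s in Ioi (0:ℝ), (deriv (fun s => s * Q s) s + 2 * l * φ' s) := by
      apply setIntegral_congr_fun measurableSet_Ioi
      intro s hs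
      show g s = deriv (fun s => s * Q s) s + 2 * l * φ' s
      rw [hHkey s hs]; ring
    rw [h1, integral_add hHint (hφ'int.const_mul (2 * l)), hHtotal,
      integral_const_mul, hφ'integral]
    ring
  · -- first representation
    intro r hr
    rw [setIntegral_congr_fun measurableSet_Ioc
      (fun s hs => hI s (Set.mem_Ioi.mpr hs.1)), hHhead r hr]
    field_simp
  · -- second representation
    intro r hr
    rw [setIntegral_congr_fun measurableSet_Ioi
      (fun s hs => hI s (Set.mem_Ioi.mpr (lt_trans hr hs))), hHtail r hr]
    field_simp
end
end
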